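/- Let q ≥ 3 and β_c(q) := (q−1)·log(q−1)/(q−2). (1) β_c(q) < q/2, so for 0 < β ≤ β_c(q) one has 2β/q < 1. (2) Suppose β ≥ β_c(q); let s be the largest real solution of s = (1 − e^{−2βs})/(1 + (q−1)·e^{−2βs}) and set s* := (1 + (q−1)s)/q, a := 2βq·s*(1−s*)/(q−1), a' := 2β(1−s*)/(q−1), b := 2β·((1−s*)/(q−1))·(s* − (1−s*)/(q−1)), and λ := (1/2)(a + a' + √((a−a')² + (q−1)b²)). Then 0 < b < a' < a < λ < 1. -/

import Mathlib

noncomputable section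

open Finset

/-- The critical inverse temperature `β_c(q) = (q-1)·log(q-1)/(q-2)`. -/
def betaC (q : ℕ) : ℝ := ((q : ℝ) - 1) * Real.log ((q : ℝ) - 1) / ((q : ℝ) - 2)

/-- `s* = (1 + (q-1)s)/q`. -/
def sStar (q : ℕ) (s : ℝ) : ℝ := (1 + ((q : ℝ) - 1) * s) / q

/-- The constant `a = 2βq·s*(1-s*)/(q-1)`. -/
def aC (q : ℕ) (β s : ℝ) : ℝ := 2 * β * q * s * (1 - s) / ((q : ℝ) - 1)

/-- The constant `a' = 2β(1-s*)/(q-1)`. -/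
def aC' (q : ℕ) (β s : ℝ) : ℝ := 2 * β * (1 - s) / ((q : ℝ) - 1)

/-- The constant `b = 2β·((1-s*)/(q-1))·(s* - (1-s*)/(q-1))`. -/
def bC (q : ℕ) (β s : ℝ) : ℝ :=
  2 * β * ((1 - s) / ((q : ℝ) - 1)) * (s - (1 - s) / ((q : ℝ) - 1))

/-- `λ = (a + a' + √((a-a')² + (q-1)b²))/2`. -/
def lam1 (q : ℕ) (β s : ℝ) : ℝ :=
  (aC q β s + aC' q β s +
    Real.sqrt ((aC q β s - aC' q β s) ^ 2 + ((q : ℝ) - 1) * (bC q β s) ^ 2)) / 2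

lemma myE (p ℓ : ℝ) (hp : 2 ≤ p) (hl : ℓ ≤ 0.6931471808 + (p-2)/2) :
    0 ≤ 2*p*(p-1)*(p+1)^2 - 2*ℓ*(2*p^3+5/2*p^2-1/2) := by
  have hpos : (0:ℝ) ≤ 2*p^3+5/2*p^2-1/2 := by nlinarith
  have h := mul_le_mul_of_nonneg_right hl hpos
  nlinarith [mul_nonneg (mul_nonneg (by linarith : (0:ℝ) ≤ p-2) (by linarith : (0:ℝ) ≤ p-2)) (by linarith : (0:ℝ) ≤ p-2), sq_nonneg (p-2)]

lemma myPhi (p u ℓ : ℝ) (hp : 2 ≤ p) (hu : 0 < u) (hup : u*p^2 ≤ 1)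
    (hl : ℓ ≤ 0.6931471808 + (p-2)/2) :
    ((2*ℓ-1)*(p^2*u) + 1) * (2*(1+p*u) + (2*p+1/2)*(1-u)) ≤ 2*p^2*(1-u)*(1+p*u) := by
  have hE := myE p ℓ hp hl
  have t1 : (0:ℝ) ≤ (1-u*p^2)*(2*p^2-2*p-5/2) := by
    apply mul_nonneg (by linarith) (by nlinarith)
  have t2 : (0:ℝ) ≤ u*(2*p*(p-1)*(p+1)^2 - 2*ℓ*(2*p^3+5/2*p^2-1/2)) := mul_nonneg hu.le hE
  have t3 : (0:ℝ) ≤ (2*p+1/2-ℓ)*(u*(1-u*p^2)) := by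
    apply mul_nonneg (by nlinarith) (mul_nonneg hu.le (by linarith))
  nlinarith [t1, t2, t3]

set_option maxHeartbeats 2000000 in
theorem stmt14 (q : ℕ) (hq : 3 ≤ q) (β : ℝ) (hβ : betaC q ≤ β) (s : ℝ)
    (hsol : s = (1 - Real.exp (-2 * β * s)) /
      (1 + ((q : ℝ) - 1) * Real.exp (-2 * β * s)))
    (hmax : ∀ t : ℝ, t = (1 - Real.exp (-2 * β * t)) /
      (1 + ((q : ℝ) - 1) * Real.exp (-2 * β * t)) → t ≤ s) :
    (betaC q < (q : ℝ) / 2 ∧ ∀ β' : ℝ, 0 < β' → β' ≤ betaC q → 2 * β' / q < 1) ∧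
    (0 < bC q β (sStar q s) ∧ bC q β (sStar q s) < aC' q β (sStar q s) ∧
      aC' q β (sStar q s) < aC q β (sStar q s) ∧
      aC q β (sStar q s) < lam1 q β (sStar q s) ∧ lam1 q β (sStar q s) < 1) := by
  have hq3 : (3:ℝ) ≤ (q:ℝ) := by exact_mod_cast hq
  set Q : ℝ := (q:ℝ) with hQdef
  have hQpos : (0:ℝ) < Q := by linarith
  have hQ1 : (2:ℝ) ≤ Q - 1 := by linarith
  -- Part 1
  have hlogle : Real.log (Q-1) ≤ (Q-1)/Real.exp 1 := by
    have h1 : Real.log ((Q-1)/Real.exp 1) = Real.log (Q-1) - 1 := by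
      rw [Real.log_div (by linarith) (Real.exp_ne_zero 1), Real.log_exp]
    have h2 : Real.log ((Q-1)/Real.exp 1) ≤ (Q-1)/Real.exp 1 - 1 :=
      Real.log_le_sub_one_of_pos (by positivity)
    linarith
  have hbc_lt : betaC q < Q / 2 := by
    unfold betaC
    rw [div_lt_iff₀ (by linarith : (0:ℝ) < Q - 2)]
    have he : (2.7182818283:ℝ) < Real.exp 1 := Real.exp_one_gt_d9
    have hexp_pos : (0:ℝ) < Real.exp 1 := Real.exp_pos 1
    have h3 : (Q-1)*Real.log (Q-1) ≤ (Q-1)^2/Real.exp 1 := by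
      have := mul_le_mul_of_nonneg_left hlogle (by linarith : (0:ℝ) ≤ Q-1)
      calc (Q-1)*Real.log (Q-1) ≤ (Q-1)*((Q-1)/Real.exp 1) := this
        _ = (Q-1)^2/Real.exp 1 := by ring
    have h4 : (Q-1)^2/Real.exp 1 < Q/2*(Q-2) := by
      rw [div_lt_iff₀ hexp_pos]
      have h5 : 2.7182818283*(Q/2*(Q-2)) ≤ Real.exp 1*(Q/2*(Q-2)) :=
        mul_le_mul_of_nonneg_right he.le (by nlinarith)
      nlinarith [sq_nonneg (Q-3)]
    linarith
  have part1 : betaC q < Q / 2 ∧ ∀ β' : ℝ, 0 < β' → β' ≤ betaC q → 2 * β' / Q < 1 := by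
    refine ⟨hbc_lt, fun β' h1 h2 => ?_⟩
    rw [div_lt_one hQpos]; linarith
  -- Part 2 setup
  have hβc_pos : 0 < betaC q := by
    apply div_pos (mul_pos (by linarith) (Real.log_pos (by linarith))) (by linarith)
  have hβpos : 0 < β := lt_of_lt_of_le hβc_pos hβ
  set s₀ : ℝ := (Q-2)/(Q-1) with hs0def
  have hs0pos : 0 < s₀ := div_pos (by linarith) (by linarith)
  have hs0le1 : s₀ ≤ 1 := by rw [hs0def, div_le_one (by linarith)]; linarith
  have hβs0 : Real.log (Q-1) ≤ β * s₀ := by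
    have he : betaC q * s₀ = Real.log (Q-1) := by
      unfold betaC; rw [hs0def, div_mul_div_comm, div_eq_iff (by nlinarith : ((q:ℝ)-2)*(Q-1) ≠ 0)]
      ring
    calc Real.log (Q-1) = betaC q * s₀ := he.symm
      _ ≤ β * s₀ := mul_le_mul_of_nonneg_right hβ hs0pos.le
  -- IVT to get s ≥ s₀
  have hs_lb : s₀ ≤ s := by
    set f : ℝ → ℝ := fun t => (1 - Real.exp (-2*β*t)) - t*(1+(Q-1)*Real.exp (-2*β*t)) with hfdef
    have hcont : ContinuousOn f (Set.Icc s₀ 1) := by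
      apply Continuous.continuousOn; fun_prop
    have hf1 : f 1 < 0 := by
      simp only [hfdef]
      have h := Real.exp_pos (-2*β*1)
      nlinarith [mul_pos (by linarith : (0:ℝ) < Q-1) h]
    have hfs0 : 0 ≤ f s₀ := by
      have hE2 : Real.exp (-2*β*s₀) * (Q-1)^2 ≤ 1 := by
        have h := Real.exp_le_exp.2 (show -2*β*s₀ ≤ -(2*Real.log (Q-1)) by nlinarith)
        have h2 : Real.exp (-(2*Real.log (Q-1))) * (Q-1)^2 = 1 := by
          rw [Real.exp_neg, two_mul, Real.exp_add, Real.exp_log (by linarith)]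
          field_simp
        nlinarith [mul_le_mul_of_nonneg_right h (sq_nonneg (Q-1))]
      have h1 : (Q-1)*s₀ = Q-2 := by rw [hs0def]; field_simp
      simp only [hfdef]
      have hv := Real.exp_pos (-2*β*s₀)
      nlinarith [hE2, h1]
    obtain ⟨t, htmem, hft⟩ := intermediate_value_Icc' hs0le1 hcont
      (show (0:ℝ) ∈ Set.Icc (f 1) (f s₀) from ⟨hf1.le, hfs0⟩)
    have hts : t ≤ s := by
      apply hmax t
      have hDt : 0 < 1+(Q-1)*Real.exp (-2*β*t) := by
        nlinarith [Real.exp_pos (-2*β*t), mul_pos (by linarith : (0:ℝ) < Q-1) (Real.exp_pos (-2*β*t))]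
      rw [eq_div_iff (ne_of_gt hDt)]
      simp only [hfdef] at hft
      have : -2 * β * t = -2*β*t := by ring
      rw [this]
      linarith [hft]
    exact le_trans htmem.1 hts
  have hs_pos : 0 < s := lt_of_lt_of_le hs0pos hs_lb
  -- key algebraic relations
  obtain ⟨u, hudef⟩ : ∃ v : ℝ, v = Real.exp (-2 * β * s) := ⟨_, rfl⟩
  rw [← hudef] at hsol
  have hu_pos : 0 < u := hudef ▸ Real.exp_pos _
  have hD : 0 < 1+(Q-1)*u := by
    have h := mul_pos (show (0:ℝ) < Q-1 by linarith) hu_pos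
    linarith
  have hkey : u*(1+(Q-1)*s) = 1 - s := by
    have h := hsol
    rw [eq_div_iff (ne_of_gt hD)] at h
    linear_combination h
  clear hsol hmax
  have hs_lt1 : s < 1 := by
    nlinarith [mul_pos hu_pos (show (0:ℝ) < 1+(Q-1)*s by nlinarith [mul_pos (show (0:ℝ) < Q-1 by linarith) hs_pos])]
  have hsQ : Q-2 ≤ s*(Q-1) := by
    rw [hs0def] at hs_lb
    exact (div_le_iff₀ (by linarith)).1 hs_lb
  clear hs_lb hs0pos hs0le1 hβs0 hbc_lt
  have hup : u*(Q-1)^2 ≤ 1 := by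
    nlinarith [hkey, mul_le_mul_of_nonneg_right hsQ (by linarith : (0:ℝ) ≤ Q),
      mul_pos hD hu_pos, hD]
  have hs_val : s = (1-u)/(1+(Q-1)*u) := by
    rw [eq_div_iff (ne_of_gt hD)]; linear_combination hkey
  -- constants
  have hxval0 : sStar q s = (1+(Q-1)*s)/Q := rfl
  obtain ⟨x, hxeq⟩ : ∃ x : ℝ, sStar q s = x := ⟨_, rfl⟩
  rw [hxeq] at hxval0 ⊢
  have hxval : x = (1+(Q-1)*s)/Q := hxval0
  obtain ⟨P, hPdef⟩ : ∃ P : ℝ, P = 2*β*((1-s)/Q) := ⟨_, rfl⟩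
  have hP_pos : 0 < P := by
    rw [hPdef]
    exact mul_pos (by linarith) (div_pos (by linarith) hQpos)
  have ha' : aC' q β x = P := by
    unfold aC'; rw [← hQdef, hxval, hPdef]; have : Q - 1 ≠ 0 := by linarith
    field_simp; ring
  have hb : bC q β x = P * s := by
    unfold bC; rw [← hQdef, hxval, hPdef]; have : Q - 1 ≠ 0 := by linarith
    field_simp; ring
  have ha : aC q β x = P * (1+(Q-1)*s) := by
    unfold aC; rw [← hQdef, hxval, hPdef]; have : Q - 1 ≠ 0 := by linarith
    field_simp; ring
  have hb_pos : 0 < bC q β x := by rw [hb]; exact mul_pos hP_pos hs_pos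
  have hba' : bC q β x < aC' q β x := by
    rw [hb, ha']; nlinarith [mul_pos hP_pos (show (0:ℝ) < 1 - s by linarith)]
  have ha'a : aC' q β x < aC q β x := by
    rw [ha', ha]
    nlinarith [mul_pos hP_pos (mul_pos (show (0:ℝ) < Q-1 by linarith) hs_pos)]
  have halam : aC q β x < lam1 q β x := by
    unfold lam1
    have h1 : (aC q β x - aC' q β x)^2 < (aC q β x - aC' q β x)^2 + (Q-1)*(bC q β x)^2 := by
      nlinarith [mul_pos (show (0:ℝ) < Q-1 by linarith) (mul_pos hb_pos hb_pos)]
    have h2 : aC q β x - aC' q β x ≤ Real.sqrt ((aC q β x - aC' q β x)^2) := by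
      rw [Real.sqrt_sq_eq_abs]; exact le_abs_self _
    have h3 := Real.sqrt_lt_sqrt (sq_nonneg _) h1
    linarith
  -- final: lam1 < 1
  have hab : aC q β x - aC' q β x = (Q-1)*(bC q β x) := by rw [ha, ha', hb]; ring
  have hin : (aC q β x - aC' q β x)^2 + (Q-1)*(bC q β x)^2 = Q*(Q-1)*(bC q β x)^2 := by
    rw [hab]; ring
  have hsqrt : Real.sqrt (Q*(Q-1)*(bC q β x)^2) < (Q-1/2)*(bC q β x) := by
    rw [Real.sqrt_lt' (by nlinarith [hb_pos] : (0:ℝ) < (Q-1/2)*(bC q β x))]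
    nlinarith [mul_pos hb_pos hb_pos]
  -- the master bound
  obtain ⟨ℓ, hldef⟩ : ∃ l : ℝ, l = Real.log (Q-1) := ⟨_, rfl⟩
  have hl : ℓ ≤ 0.6931471808 + ((Q-1)-2)/2 := by
    have h := Real.log_le_sub_one_of_pos (show (0:ℝ) < (Q-1)/2 by linarith)
    have h2 : Real.log ((Q-1)/2) = Real.log (Q-1) - Real.log 2 :=
      Real.log_div (by linarith) two_ne_zero
    have h3 := Real.log_two_lt_d9
    rw [hldef]; rw [h2] at h
    norm_num at h3 ⊢
    linarith
  have hcu : 0 < (Q-1)^2*u := mul_pos (by nlinarith) hu_pos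
  have hbs : 2*β*s ≤ 2*ℓ - 1 + 1/((Q-1)^2*u) := by
    have hLu : Real.log u = -(2*β*s) := by rw [hudef, Real.log_exp]; ring
    have h := Real.log_le_sub_one_of_pos (show (0:ℝ) < 1/((Q-1)^2*u) by positivity)
    rw [one_div, Real.log_inv, Real.log_mul (by nlinarith) (ne_of_gt hu_pos),
      Real.log_pow] at h
    rw [hldef]
    push_cast at h
    rw [show (1:ℝ)/((Q-1)^2*u) = ((Q-1)^2*u)⁻¹ from one_div _]
    linarith [h, hLu.symm.le]
  have hphi := myPhi (Q-1) u ℓ hQ1 hu_pos (by linarith [hup]) (by linarith [hl])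
  -- turn hphi into the s-form bound
  have hr : (0:ℝ) ≤ (1-s)*(2+(2*Q-3/2)*s) := by
    apply mul_nonneg (by linarith)
    nlinarith [hs_pos]
  have h2' : (2*ℓ-1+1/((Q-1)^2*u))*((1-s)*(2+(2*Q-3/2)*s)) ≤ 2*Q*s := by
    have hrw : (2*ℓ-1+1/((Q-1)^2*u)) = ((2*ℓ-1)*((Q-1)^2*u)+1)/((Q-1)^2*u) := by
      field_simp
    rw [hrw, div_mul_eq_mul_div, div_le_iff₀ hcu]
    apply le_of_mul_le_mul_right _ (pow_pos hD 2)
    have e1 : ((2*ℓ-1)*((Q-1)^2*u)+1)*((1-s)*(2+(2*Q-3/2)*s))*(1+(Q-1)*u)^2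
        = (Q*u)*(((2*ℓ-1)*((Q-1)^2*u)+1)*(2*(1+(Q-1)*u)+(2*(Q-1)+1/2)*(1-u))) := by
      rw [hs_val]; field_simp; ring
    have e2 : 2*Q*s*((Q-1)^2*u)*(1+(Q-1)*u)^2
        = (Q*u)*(2*(Q-1)^2*(1-u)*(1+(Q-1)*u)) := by
      rw [hs_val]; field_simp
    rw [e1, e2]
    exact mul_le_mul_of_nonneg_left hphi (by positivity)
  have h1' : 2*β*s*((1-s)*(2+(2*Q-3/2)*s)) ≤ (2*ℓ-1+1/((Q-1)^2*u))*((1-s)*(2+(2*Q-3/2)*s)) :=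
    mul_le_mul_of_nonneg_right hbs hr
  have hfinal : P * (2+(2*Q-3/2)*s) ≤ 2 := by
    have hQs : (0:ℝ) < Q*s := mul_pos hQpos hs_pos
    apply le_of_mul_le_mul_right _ hQs
    have hPQ : P*Q = 2*β*(1-s) := by rw [hPdef]; field_simp
    calc P*(2+(2*Q-3/2)*s)*(Q*s) = (P*Q)*(s*(2+(2*Q-3/2)*s)) := by ring
      _ = 2*β*s*((1-s)*(2+(2*Q-3/2)*s)) := by rw [hPQ]; ring
      _ ≤ 2*Q*s := le_trans h1' h2'
      _ = 2*(Q*s) := by ring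
  have hlam1 : lam1 q β x < 1 := by
    unfold lam1
    rw [hin]
    have : aC q β x + aC' q β x + (Q-1/2)*(bC q β x) = P * (2+(2*Q-3/2)*s) := by
      rw [ha, ha', hb]; ring
    linarith [hsqrt, hfinal]
  exact ⟨part1, hb_pos, hba', ha'a, halam, hlam1⟩
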